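/- For integers u, v ≥ 2 with uv ≠ 4, the group generated by L_u = [[1,0],[u,1]] and R_v = [[1,v],[0,1]] is a proper subgroup of 𝒢_{u,v}; equivalently, there exists a matrix in 𝒢_{u,v} that is not a product of powers of L_u and R_v. -/

import Mathlib

abbrev SL2 := Matrix.SpecialLinearGroup (Fin 2) ℤ

/-- `L_u = [[1,0],[u,1]]`. -/
def Lmat (u : ℤ) : SL2 :=
  ⟨!![1, 0; u, 1], by simp [Matrix.det_fin_two_of]⟩

/-- `R_v = [[1,v],[0,1]]`. -/
def Rmat (v : ℤ) : SL2 :=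
  ⟨!![1, v; 0, 1], by simp [Matrix.det_fin_two_of]⟩

/-- The set `𝒢_{u,v}`. -/
def Gscr (u v : ℤ) : Set SL2 :=
  {M | ∃ n1 n2 n3 n4 : ℤ,
    (M : Matrix (Fin 2) (Fin 2) ℤ) = !![1 + u*v*n1, v*n2; u*n3, 1 + u*v*n4]}

/-- The group `G_{u,v}` generated by `L_u` and `R_v`. -/
def Guv (u v : ℤ) : Subgroup SL2 := Subgroup.closure {Lmat u, Rmat v}

/-- Alternating product `R^{a₀} L^{a₁} R^{a₂} ⋯` from a list of exponents
(the boolean records whether the next factor is a power of `R`). -/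
def altProd (u v : ℤ) : Bool → List ℤ → SL2
  | _, [] => 1
  | true, a :: l => (Rmat v) ^ a * altProd u v false l
  | false, a :: l => (Lmat u) ^ a * altProd u v true l

namespace GuvAux

lemma Rmat_mul (x y : ℤ) : Rmat x * Rmat y = Rmat (x + y) := by
  apply Subtype.ext
  show (Rmat x).1 * (Rmat y).1 = (Rmat (x+y)).1
  ext i j
  fin_cases i <;> fin_cases j <;>
    simp [Rmat, Matrix.mul_apply, Fin.sum_univ_two] <;> ring

lemma Lmat_mul (x y : ℤ) : Lmat x * Lmat y = Lmat (x + y) := by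
  apply Subtype.ext
  show (Lmat x).1 * (Lmat y).1 = (Lmat (x+y)).1
  ext i j
  fin_cases i <;> fin_cases j <;>
    simp [Lmat, Matrix.mul_apply, Fin.sum_univ_two] <;> ring

lemma Rmat_zero : Rmat 0 = 1 := by
  apply Subtype.ext
  show (Rmat 0).1 = (1 : Matrix (Fin 2) (Fin 2) ℤ)
  ext i j
  fin_cases i <;> fin_cases j <;> simp [Rmat, Matrix.one_apply]

lemma Lmat_zero : Lmat 0 = 1 := by
  apply Subtype.ext
  show (Lmat 0).1 = (1 : Matrix (Fin 2) (Fin 2) ℤ)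
  ext i j
  fin_cases i <;> fin_cases j <;> simp [Lmat, Matrix.one_apply]

lemma Rmat_zpow (v : ℤ) (a : ℤ) : (Rmat v) ^ a = Rmat (a * v) := by
  induction a using Int.induction_on with
  | zero => simpa using Rmat_zero.symm
  | succ n ih =>
      rw [zpow_add_one, ih, Rmat_mul]
      ring_nf
  | pred n ih =>
      have hinv : (Rmat v)⁻¹ = Rmat (-v) := by
        rw [inv_eq_iff_mul_eq_one, Rmat_mul]
        simpa using Rmat_zero
      rw [zpow_sub_one, ih, hinv, Rmat_mul]
      ring_nf

lemma Lmat_zpow (u : ℤ) (a : ℤ) : (Lmat u) ^ a = Lmat (a * u) := by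
  induction a using Int.induction_on with
  | zero => simpa using Lmat_zero.symm
  | succ n ih =>
      rw [zpow_add_one, ih, Lmat_mul]
      ring_nf
  | pred n ih =>
      have hinv : (Lmat u)⁻¹ = Lmat (-u) := by
        rw [inv_eq_iff_mul_eq_one, Lmat_mul]
        simpa using Lmat_zero
      rw [zpow_sub_one, ih, hinv, Lmat_mul]
      ring_nf

/-- Row domination: first row strictly `(v-1)`-dominates the second. -/
def PR (v : ℤ) (M : SL2) : Prop :=
  (v - 1) * |(M : Matrix (Fin 2) (Fin 2) ℤ) 1 0| < |(M : Matrix (Fin 2) (Fin 2) ℤ) 0 0| ∧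
  (v - 1) * |(M : Matrix (Fin 2) (Fin 2) ℤ) 1 1| < |(M : Matrix (Fin 2) (Fin 2) ℤ) 0 1|

/-- Row domination: second row strictly `(u-1)`-dominates the first. -/
def PL (u : ℤ) (M : SL2) : Prop :=
  (u - 1) * |(M : Matrix (Fin 2) (Fin 2) ℤ) 0 0| < |(M : Matrix (Fin 2) (Fin 2) ℤ) 1 0| ∧
  (u - 1) * |(M : Matrix (Fin 2) (Fin 2) ℤ) 0 1| < |(M : Matrix (Fin 2) (Fin 2) ℤ) 1 1|

lemma key (v w x y : ℤ) (hv : 2 ≤ v) (hw : v ≤ |w|) (hxy : |x| < |y|) :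
    (v - 1) * |y| < |x + w * y| := by
  have h1 : |w * y| ≤ |x + w * y| + |x| := by
    have : |(x + w * y) + (-x)| ≤ |x + w * y| + |(-x)| := abs_add_le _ _
    simpa using this
  have h2 : v * |y| ≤ |w * y| := by
    rw [abs_mul]
    exact mul_le_mul_of_nonneg_right hw (abs_nonneg y)
  nlinarith [abs_nonneg x, abs_nonneg y]

lemma entries_mul (A N : SL2) (i j : Fin 2) :
    ((A * N : SL2) : Matrix (Fin 2) (Fin 2) ℤ) i j
      = (A : Matrix (Fin 2) (Fin 2) ℤ) i 0 * (N : Matrix (Fin 2) (Fin 2) ℤ) 0 j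
        + (A : Matrix (Fin 2) (Fin 2) ℤ) i 1 * (N : Matrix (Fin 2) (Fin 2) ℤ) 1 j := by
  rw [Matrix.SpecialLinearGroup.coe_mul, Matrix.mul_apply, Fin.sum_univ_two]

lemma Rmat_entries (w : ℤ) :
    (Rmat w : Matrix (Fin 2) (Fin 2) ℤ) 0 0 = 1 ∧
    (Rmat w : Matrix (Fin 2) (Fin 2) ℤ) 0 1 = w ∧
    (Rmat w : Matrix (Fin 2) (Fin 2) ℤ) 1 0 = 0 ∧
    (Rmat w : Matrix (Fin 2) (Fin 2) ℤ) 1 1 = 1 := by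
  refine ⟨?_, ?_, ?_, ?_⟩ <;> simp [Rmat]

lemma Lmat_entries (w : ℤ) :
    (Lmat w : Matrix (Fin 2) (Fin 2) ℤ) 0 0 = 1 ∧
    (Lmat w : Matrix (Fin 2) (Fin 2) ℤ) 0 1 = 0 ∧
    (Lmat w : Matrix (Fin 2) (Fin 2) ℤ) 1 0 = w ∧
    (Lmat w : Matrix (Fin 2) (Fin 2) ℤ) 1 1 = 1 := by
  refine ⟨?_, ?_, ?_, ?_⟩ <;> simp [Lmat]

lemma one_le_abs' (a : ℤ) (ha : a ≠ 0) : 1 ≤ |a| := by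
  rcases abs_pos.mpr ha with h
  omega

lemma abs_mul_ge (a v : ℤ) (ha : a ≠ 0) (hv : 0 ≤ v) : v ≤ |a * v| := by
  rw [abs_mul]
  have h1 : 1 ≤ |a| := one_le_abs' a ha
  have h2 : |v| = v := abs_of_nonneg hv
  nlinarith

lemma step_R (u v : ℤ) (hu : 2 ≤ u) (hv : 2 ≤ v) (a : ℤ) (ha : a ≠ 0) (N : SL2)
    (h : N = 1 ∨ PL u N) : PR v ((Rmat v) ^ a * N) := by
  rw [Rmat_zpow]
  have hw : v ≤ |a * v| := abs_mul_ge a v ha (by omega)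
  obtain ⟨r00, r01, r10, r11⟩ := Rmat_entries (a * v)
  have e0 : ∀ j, ((Rmat (a*v) * N : SL2) : Matrix (Fin 2) (Fin 2) ℤ) 0 j
      = (N : Matrix (Fin 2) (Fin 2) ℤ) 0 j + (a*v) * (N : Matrix (Fin 2) (Fin 2) ℤ) 1 j := by
    intro j; rw [entries_mul, r00, r01]; ring
  have e1 : ∀ j, ((Rmat (a*v) * N : SL2) : Matrix (Fin 2) (Fin 2) ℤ) 1 j
      = (N : Matrix (Fin 2) (Fin 2) ℤ) 1 j := by
    intro j; rw [entries_mul, r10, r11]; ring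
  have habs : ∀ j : Fin 2, |(N : Matrix (Fin 2) (Fin 2) ℤ) 0 j| <
      |(N : Matrix (Fin 2) (Fin 2) ℤ) 1 j| ∨
      ((N : Matrix (Fin 2) (Fin 2) ℤ) 0 j = (1 : Matrix (Fin 2) (Fin 2) ℤ) 0 j ∧
       (N : Matrix (Fin 2) (Fin 2) ℤ) 1 j = (1 : Matrix (Fin 2) (Fin 2) ℤ) 1 j) := by
    intro j
    rcases h with h1 | hPL
    · right; rw [h1]; exact ⟨rfl, rfl⟩
    · left
      have hj : (u - 1) * |(N : Matrix (Fin 2) (Fin 2) ℤ) 0 j| <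
          |(N : Matrix (Fin 2) (Fin 2) ℤ) 1 j| := by
        fin_cases j
        · exact hPL.1
        · exact hPL.2
      have h0 := abs_nonneg ((N : Matrix (Fin 2) (Fin 2) ℤ) 0 j)
      nlinarith
  constructor
  · rw [e0 0, e1 0]
    rcases habs 0 with hlt | ⟨ha0, ha1⟩
    · exact key v (a*v) _ _ hv hw hlt
    · rw [ha0, ha1]
      simp [Matrix.one_apply]
  · rw [e0 1, e1 1]
    rcases habs 1 with hlt | ⟨ha0, ha1⟩
    · exact key v (a*v) _ _ hv hw hlt
    · rw [ha0, ha1]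
      have : (1 : Matrix (Fin 2) (Fin 2) ℤ) 0 1 = 0 := by simp [Matrix.one_apply]
      have h11 : (1 : Matrix (Fin 2) (Fin 2) ℤ) 1 1 = 1 := by simp [Matrix.one_apply]
      rw [this, h11]
      have : (0 : ℤ) + a * v * 1 = a * v := by ring
      rw [this]
      have := abs_nonneg (a*v)
      nlinarith [abs_one (α := ℤ)]

lemma step_L (u v : ℤ) (hu : 2 ≤ u) (hv : 2 ≤ v) (a : ℤ) (ha : a ≠ 0) (N : SL2)
    (h : N = 1 ∨ PR v N) : PL u ((Lmat u) ^ a * N) := by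
  rw [Lmat_zpow]
  have hw : u ≤ |a * u| := abs_mul_ge a u ha (by omega)
  obtain ⟨r00, r01, r10, r11⟩ := Lmat_entries (a * u)
  have e0 : ∀ j, ((Lmat (a*u) * N : SL2) : Matrix (Fin 2) (Fin 2) ℤ) 0 j
      = (N : Matrix (Fin 2) (Fin 2) ℤ) 0 j := by
    intro j; rw [entries_mul, r00, r01]; ring
  have e1 : ∀ j, ((Lmat (a*u) * N : SL2) : Matrix (Fin 2) (Fin 2) ℤ) 1 j
      = (N : Matrix (Fin 2) (Fin 2) ℤ) 1 j + (a*u) * (N : Matrix (Fin 2) (Fin 2) ℤ) 0 j := by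
    intro j; rw [entries_mul, r10, r11]; ring
  have habs : ∀ j : Fin 2, |(N : Matrix (Fin 2) (Fin 2) ℤ) 1 j| <
      |(N : Matrix (Fin 2) (Fin 2) ℤ) 0 j| ∨
      ((N : Matrix (Fin 2) (Fin 2) ℤ) 0 j = (1 : Matrix (Fin 2) (Fin 2) ℤ) 0 j ∧
       (N : Matrix (Fin 2) (Fin 2) ℤ) 1 j = (1 : Matrix (Fin 2) (Fin 2) ℤ) 1 j) := by
    intro j
    rcases h with h1 | hPR
    · right; rw [h1]; exact ⟨rfl, rfl⟩
    · left
      have hj : (v - 1) * |(N : Matrix (Fin 2) (Fin 2) ℤ) 1 j| <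
          |(N : Matrix (Fin 2) (Fin 2) ℤ) 0 j| := by
        fin_cases j
        · exact hPR.1
        · exact hPR.2
      have h0 := abs_nonneg ((N : Matrix (Fin 2) (Fin 2) ℤ) 1 j)
      nlinarith
  constructor
  · rw [e0 0, e1 0]
    rcases habs 0 with hlt | ⟨ha0, ha1⟩
    · exact key u (a*u) _ _ hu hw hlt
    · rw [ha0, ha1]
      have h00 : (1 : Matrix (Fin 2) (Fin 2) ℤ) 0 0 = 1 := by simp [Matrix.one_apply]
      have h10 : (1 : Matrix (Fin 2) (Fin 2) ℤ) 1 0 = 0 := by simp [Matrix.one_apply]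
      rw [h00, h10]
      have : (0 : ℤ) + a * u * 1 = a * u := by ring
      rw [this]
      nlinarith [abs_one (α := ℤ), abs_nonneg (a*u)]
  · rw [e0 1, e1 1]
    rcases habs 1 with hlt | ⟨ha0, ha1⟩
    · exact key u (a*u) _ _ hu hw hlt
    · rw [ha0, ha1]
      have h01 : (1 : Matrix (Fin 2) (Fin 2) ℤ) 0 1 = 0 := by simp [Matrix.one_apply]
      have h11 : (1 : Matrix (Fin 2) (Fin 2) ℤ) 1 1 = 1 := by simp [Matrix.one_apply]
      rw [h01, h11]
      simp

lemma altProd_nil (u v : ℤ) (b : Bool) : altProd u v b [] = 1 := by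
  cases b <;> rfl

/-- The generator used at a parity. -/
def gen (u v : ℤ) (b : Bool) : SL2 := bif b then Rmat v else Lmat u

lemma altProd_cons (u v a : ℤ) (l : List ℤ) (b : Bool) :
    altProd u v b (a :: l) = (gen u v b) ^ a * altProd u v (!b) l := by
  cases b <;> rfl

/-- Parity flip along a list. -/
def flipN : List ℤ → Bool → Bool
  | [], b => b
  | _ :: l, b => flipN l (!b)

lemma altProd_append (u v : ℤ) :
    ∀ (l l' : List ℤ) (b : Bool),
      altProd u v b (l ++ l') = altProd u v b l * altProd u v (flipN l b) l' := by
  intro l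
  induction l with
  | nil => intro l' b; simp [altProd_nil, flipN]
  | cons a l ih =>
      intro l' b
      rw [List.cons_append, altProd_cons, ih, altProd_cons, mul_assoc]
      rfl

lemma altProd_zero_cons (u v : ℤ) (l : List ℤ) (b : Bool) :
    altProd u v b (0 :: l) = altProd u v (!b) l := by
  rw [altProd_cons, zpow_zero, one_mul]

/-- The set of alternating products is closed under inverses. -/
lemma altProd_inv (u v : ℤ) :
    ∀ (l : List ℤ) (b : Bool), ∃ b' l', (altProd u v b l)⁻¹ = altProd u v b' l' := by
  intro l
  induction l with
  | nil => intro b; exact ⟨b, [], by rw [altProd_nil]; simp [altProd_nil]⟩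
  | cons a l ih =>
      intro b
      obtain ⟨c, m, hm⟩ := ih (!b)
      have hgen : ∀ e : Bool, (gen u v e) ^ (-a) = altProd u v e [-a] := by
        intro e
        rw [altProd_cons, altProd_nil, mul_one]
      have key2 : (altProd u v b (a :: l))⁻¹ = altProd u v c m * gen u v b ^ (-a) := by
        rw [altProd_cons, mul_inv_rev, hm, ← zpow_neg]
      by_cases hf : flipN m c = b
      · refine ⟨c, m ++ [-a], ?_⟩
        rw [key2, altProd_append, hf, ← hgen b]
      · have hf' : flipN m c = !b := by
          cases hb : flipN m c <;> cases b <;> simp_all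
        refine ⟨c, m ++ [0, -a], ?_⟩
        rw [key2, altProd_append, hf']
        have h2 : altProd u v (!b) (0 :: [-a]) = altProd u v b [-a] := by
          rw [altProd_zero_cons, Bool.not_not]
        rw [h2, ← hgen b]

/-- Every element of `Guv` is an alternating product. -/
lemma mem_Guv_rep (u v : ℤ) (M : SL2) (h : M ∈ Guv u v) :
    ∃ b l, M = altProd u v b l := by
  induction h using Subgroup.closure_induction with
  | mem x hx =>
      rcases hx with hx | hx
      · exact ⟨false, [1], by rw [hx, altProd_cons, altProd_nil, mul_one, zpow_one]; rfl⟩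
      · exact ⟨true, [1], by rw [hx, altProd_cons, altProd_nil, mul_one, zpow_one]; rfl⟩
  | one => exact ⟨true, [], (altProd_nil u v true).symm⟩
  | mul x y hx hy ihx ihy =>
      obtain ⟨b, l, hl⟩ := ihx
      obtain ⟨b', l', hl'⟩ := ihy
      by_cases hf : flipN l b = b'
      · exact ⟨b, l ++ l', by rw [altProd_append, hf, ← hl, ← hl']⟩
      · have hf' : b' = !(flipN l b) := by
          cases hb : flipN l b <;> cases b' <;> simp_all
        refine ⟨b, l ++ (0 :: l'), ?_⟩
        rw [altProd_append, ← hl]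
        have : altProd u v (flipN l b) (0 :: l') = altProd u v b' l' := by
          rw [hf', altProd_zero_cons]
        rw [this, ← hl']
  | inv x hx ihx =>
      obtain ⟨b, l, hl⟩ := ihx
      obtain ⟨b', l', h'⟩ := altProd_inv u v l b
      exact ⟨b', l', by rw [hl, h']⟩

/-- Normalization: every alternating product equals one with all exponents nonzero. -/
lemma altProd_norm (u v : ℤ) :
    ∀ (l : List ℤ) (b : Bool), ∃ b' l', (∀ x ∈ l', x ≠ 0) ∧
      altProd u v b l = altProd u v b' l' := by
  intro l
  induction l with
  | nil => intro b; exact ⟨b, [], by simp, rfl⟩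
  | cons a l ih =>
      intro b
      obtain ⟨b2, l2, hnz, heq⟩ := ih (!b)
      by_cases hb : b2 = !b
      · subst hb
        by_cases ha : a = 0
        · refine ⟨!b, l2, hnz, ?_⟩
          rw [altProd_cons, heq, ha, zpow_zero, one_mul]
        · refine ⟨b, a :: l2, ?_, ?_⟩
          · intro x hx
            rcases List.mem_cons.mp hx with rfl | hx
            · exact ha
            · exact hnz x hx
          · rw [altProd_cons, heq, altProd_cons]
      · have hb2 : b2 = b := by cases b2 <;> cases b <;> simp_all
        rw [hb2] at heq
        cases l2 with
        | nil =>
            by_cases ha : a = 0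
            · refine ⟨b, [], by simp, ?_⟩
              rw [altProd_cons, heq, altProd_nil, ha, zpow_zero, one_mul]
            · refine ⟨b, [a], by simpa using ha, ?_⟩
              rw [altProd_cons, heq, altProd_nil, altProd_cons, altProd_nil]
        | cons c l3 =>
            have hc : c ≠ 0 := hnz c List.mem_cons_self
            by_cases hac : a + c = 0
            · refine ⟨!b, l3, fun x hx => hnz x (List.mem_cons_of_mem c hx), ?_⟩
              rw [altProd_cons, heq, altProd_cons, ← mul_assoc, ← zpow_add, hac,
                zpow_zero, one_mul]
            · refine ⟨b, (a + c) :: l3, ?_, ?_⟩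
              · intro x hx
                rcases List.mem_cons.mp hx with rfl | hx
                · exact hac
                · exact hnz x (List.mem_cons_of_mem c hx)
              · rw [altProd_cons, heq, altProd_cons, ← mul_assoc, ← zpow_add,
                  altProd_cons]

/-- The ping-pong invariant for reduced alternating products. -/
lemma altProd_invariant (u v : ℤ) (hu : 2 ≤ u) (hv : 2 ≤ v) :
    ∀ (l : List ℤ), (∀ x ∈ l, x ≠ 0) → ∀ b : Bool,
      altProd u v b l = 1 ∨ (b = true ∧ PR v (altProd u v b l)) ∨
        (b = false ∧ PL u (altProd u v b l)) := by
  intro l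
  induction l with
  | nil => intro _ b; exact Or.inl (altProd_nil u v b)
  | cons a l ih =>
      intro hnz b
      have ha : a ≠ 0 := hnz a List.mem_cons_self
      have hl : ∀ x ∈ l, x ≠ 0 := fun x hx => hnz x (List.mem_cons_of_mem a hx)
      have hN := ih hl (!b)
      cases b with
      | true =>
          refine Or.inr (Or.inl ⟨rfl, ?_⟩)
          rw [altProd_cons]
          refine step_R u v hu hv a ha _ ?_
          rcases hN with h1 | h2 | h3
          · exact Or.inl h1
          · simp at h2
          · exact Or.inr h3.2
      | false =>
          refine Or.inr (Or.inr ⟨rfl, ?_⟩)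
          rw [altProd_cons]
          refine step_L u v hu hv a ha _ ?_
          rcases hN with h1 | h2 | h3
          · exact Or.inl h1
          · exact Or.inr h2.2
          · simp at h3

/-- Every element of `Guv` is `1`, or row-dominated one way or the other. -/
lemma mem_Guv_cases (u v : ℤ) (hu : 2 ≤ u) (hv : 2 ≤ v) (M : SL2) (h : M ∈ Guv u v) :
    M = 1 ∨ PR v M ∨ PL u M := by
  obtain ⟨b, l, hl⟩ := mem_Guv_rep u v M h
  obtain ⟨b', l', hnz, heq⟩ := altProd_norm u v l b
  have hM : M = altProd u v b' l' := by rw [hl, heq]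
  rcases altProd_invariant u v hu hv l' hnz b' with h1 | h2 | h3
  · exact Or.inl (hM.trans h1)
  · exact Or.inr (Or.inl (hM ▸ h2.2))
  · exact Or.inr (Or.inr (hM ▸ h3.2))

end GuvAux

open GuvAux in
/-- For `u, v ≥ 2` with `uv ≠ 4`, the group `G_{u,v}` is a proper subgroup of
`𝒢_{u,v}`. -/
theorem Guv_proper (u v : ℤ) (hu : 2 ≤ u) (hv : 2 ≤ v) (huv : u * v ≠ 4) :
    ∃ M : SL2, M ∈ Gscr u v ∧ M ∉ Guv u v := by
  have huv0 : 0 < u * v := by positivity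
  have huv4 : 4 ≤ u * v := by nlinarith
  by_cases hu3 : 3 ≤ u
  · -- witness `[[1-uv, uv], [-uv, 1+uv]]`
    obtain ⟨W, hW⟩ : ∃ W : SL2,
        (W : Matrix (Fin 2) (Fin 2) ℤ) = !![1 - u*v, u*v; -(u*v), 1 + u*v] :=
      ⟨⟨_, by simp [Matrix.det_fin_two_of]; ring⟩, rfl⟩
    refine ⟨W, ⟨-1, u, -v, 1, by
      rw [hW]; ext i j; fin_cases i <;> fin_cases j <;> simp <;> ring⟩, ?_⟩
    intro hmem
    rcases mem_Guv_cases u v hu hv W hmem with h1 | h2 | h3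
    · have h0 : (W : Matrix (Fin 2) (Fin 2) ℤ) 1 0 = 0 := by
        rw [h1]; simp
      rw [hW] at h0
      simp at h0
      rcases h0 with h | h <;> omega
    · have h := h2.1
      rw [hW] at h
      simp only [Matrix.cons_val', Matrix.cons_val_zero, Matrix.cons_val_one,
        Matrix.head_cons, Matrix.head_fin_const, Matrix.empty_val',
        Matrix.cons_val_fin_one, Matrix.of_apply] at h
      have e1 : |(-(u * v))| = u * v := by rw [abs_neg]; exact abs_of_pos huv0
      have e2 : |1 - u * v| = u * v - 1 := by
        rw [abs_of_nonpos (by linarith)]; ring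
      rw [e1, e2] at h
      nlinarith
    · have h := h3.1
      rw [hW] at h
      simp only [Matrix.cons_val', Matrix.cons_val_zero, Matrix.cons_val_one,
        Matrix.head_cons, Matrix.head_fin_const, Matrix.empty_val',
        Matrix.cons_val_fin_one, Matrix.of_apply] at h
      have e1 : |(-(u * v))| = u * v := by rw [abs_neg]; exact abs_of_pos huv0
      have e2 : |1 - u * v| = u * v - 1 := by
        rw [abs_of_nonpos (by linarith)]; ring
      rw [e1, e2] at h
      nlinarith
  · -- u = 2, hence v ≥ 3; witness `[[1+uv, -uv], [uv, 1-uv]]`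
    have hu2 : u = 2 := by omega
    have hv3 : 3 ≤ v := by
      rcases lt_or_ge v 3 with h | h
      · exfalso; apply huv; rw [hu2]; omega
      · exact h
    obtain ⟨W, hW⟩ : ∃ W : SL2,
        (W : Matrix (Fin 2) (Fin 2) ℤ) = !![1 + u*v, -(u*v); u*v, 1 - u*v] :=
      ⟨⟨_, by simp [Matrix.det_fin_two_of]; ring⟩, rfl⟩
    refine ⟨W, ⟨1, -u, v, -1, by
      rw [hW]; ext i j; fin_cases i <;> fin_cases j <;> simp <;> ring⟩, ?_⟩
    intro hmem
    have hv6 : 6 ≤ u * v := by nlinarith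
    rcases mem_Guv_cases u v hu hv W hmem with h1 | h2 | h3
    · have h0 : (W : Matrix (Fin 2) (Fin 2) ℤ) 1 0 = 0 := by
        rw [h1]; simp
      rw [hW] at h0
      simp at h0
      rcases h0 with h | h <;> omega
    · have h := h2.1
      rw [hW] at h
      simp only [Matrix.cons_val', Matrix.cons_val_zero, Matrix.cons_val_one,
        Matrix.head_cons, Matrix.head_fin_const, Matrix.empty_val',
        Matrix.cons_val_fin_one, Matrix.of_apply] at h
      have e1 : |u * v| = u * v := abs_of_pos huv0
      have e2 : |1 + u * v| = u * v + 1 := by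
        rw [abs_of_pos (by linarith)]; ring
      rw [e1, e2] at h
      nlinarith
    · have h := h3.1
      rw [hW] at h
      simp only [Matrix.cons_val', Matrix.cons_val_zero, Matrix.cons_val_one,
        Matrix.head_cons, Matrix.head_fin_const, Matrix.empty_val',
        Matrix.cons_val_fin_one, Matrix.of_apply] at h
      have e1 : |u * v| = u * v := abs_of_pos huv0
      have e2 : |1 + u * v| = u * v + 1 := by
        rw [abs_of_pos (by linarith)]; ring
      rw [e1, e2] at h
      nlinarith
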